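/- Let π be a permutation matrix in GL_n over a field, E± = (π N⁻ π⁻¹) ∩ N±. Then every g ∈ π N⁻ π⁻¹ also factors uniquely as g = c₊ c₋ with c₊ ∈ E⁺, c₋ ∈ E⁻, and the map Φ : π N⁻ π⁻¹ → E⁺ × E⁻ sending g (with factorizations g = b₋ b₊ = c₊ c₋) to (b₊, c₋) is a bijection. -/

import Mathlib

open Matrix

def IsLowerUni {k : Type*} [Field k] {n : ℕ} (M : Matrix (Fin n) (Fin n) k) : Prop :=
  (∀ i, M i i = 1) ∧ ∀ i j, i < j → M i j = 0

def IsUpperUni {k : Type*} [Field k] {n : ℕ} (M : Matrix (Fin n) (Fin n) k) : Prop :=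
  (∀ i, M i i = 1) ∧ ∀ i j, j < i → M i j = 0

def permConj {k : Type*} [Field k] {n : ℕ} (π : Equiv.Perm (Fin n))
    (M : Matrix (Fin n) (Fin n) k) : Matrix (Fin n) (Fin n) k :=
  π.permMatrix k * M * (π⁻¹).permMatrix k

/-- The set `π N⁻ π⁻¹`. -/
def SConj {k : Type*} [Field k] {n : ℕ} (π : Equiv.Perm (Fin n)) :
    Set (Matrix (Fin n) (Fin n) k) :=
  {g | ∃ h, IsLowerUni h ∧ g = permConj π h}

/-- `E⁺ = (π N⁻ π⁻¹) ∩ N⁺`. -/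
def Eplus {k : Type*} [Field k] {n : ℕ} (π : Equiv.Perm (Fin n)) :
    Set (Matrix (Fin n) (Fin n) k) :=
  {g | g ∈ SConj π ∧ IsUpperUni g}

/-- `E⁻ = (π N⁻ π⁻¹) ∩ N⁻`. -/
def Eminus {k : Type*} [Field k] {n : ℕ} (π : Equiv.Perm (Fin n)) :
    Set (Matrix (Fin n) (Fin n) k) :=
  {g | g ∈ SConj π ∧ IsLowerUni g}

namespace Stmt5Aux
open Finset

variable {k : Type*} [Field k] {n : ℕ}

/-- Matrices with unit diagonal whose off-diagonal support lies in `R`. -/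
def InU (R : Fin n → Fin n → Prop) (M : Matrix (Fin n) (Fin n) k) : Prop :=
  (∀ i, M i i = 1) ∧ ∀ i j, i ≠ j → ¬ R i j → M i j = 0

theorem InU.mono {R S : Fin n → Fin n → Prop} (h : ∀ i j, R i j → S i j)
    {M : Matrix (Fin n) (Fin n) k} (hM : InU R M) : InU S M :=
  ⟨hM.1, fun i j hij hS => hM.2 i j hij (fun hR => hS (h i j hR))⟩

theorem InU.one (R : Fin n → Fin n → Prop) : InU R (1 : Matrix (Fin n) (Fin n) k) :=
  ⟨fun i => Matrix.one_apply_eq i, fun _ _ hij _ => Matrix.one_apply_ne hij⟩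

section ordered

variable {R : Fin n → Fin n → Prop} {ρ : Fin n → Fin n}
  (htr : ∀ {a b c}, R a b → R b c → R a c)
  (hord : ∀ {i j}, R i j → ρ j < ρ i)

include htr hord in
theorem InU.mul {M N : Matrix (Fin n) (Fin n) k} (hM : InU R M) (hN : InU R N) :
    InU R (M * N) := by
  constructor
  · intro i
    rw [Matrix.mul_apply]
    rw [Finset.sum_eq_single i]
    · rw [hM.1, hN.1, one_mul]
    · intro l _ hl
      by_cases hRl : R i l
      · by_cases hRl' : R l i
        · exact absurd (htr hRl hRl') (fun h => lt_irrefl _ (hord h))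
        · rw [hN.2 l i hl hRl', mul_zero]
      · rw [hM.2 i l (Ne.symm hl) hRl, zero_mul]
    · intro h; exact absurd (Finset.mem_univ i) h
  · intro i j hij hR
    rw [Matrix.mul_apply]
    apply Finset.sum_eq_zero
    intro l _
    by_cases h1 : R i l
    · by_cases h2 : R l j
      · exact absurd (htr h1 h2) hR
      · have hlj : l ≠ j := fun e => hR (e ▸ h1)
        rw [hN.2 l j hlj h2, mul_zero]
    · by_cases hli : l = i
      · subst hli; rw [hN.2 l j hij hR, mul_zero]
      · rw [hM.2 i l (Ne.symm hli) h1, zero_mul]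

include htr hord in
theorem InU.exists_inv {M : Matrix (Fin n) (Fin n) k} (hM : InU R M) :
    ∃ M', InU R M' ∧ M * M' = 1 ∧ M' * M = 1 := by
  classical
  set X : Matrix (Fin n) (Fin n) k := 1 - M with hX
  -- support of X
  have hXsupp : ∀ i j, ¬ R i j → X i j = 0 := by
    intro i j hR
    by_cases hij : i = j
    · subst hij; simp [hX, hM.1 i]
    · simp [hX, Matrix.one_apply_ne hij, hM.2 i j hij hR]
  -- powers keep support
  have hpow : ∀ m, ∀ i j, i ≠ j → ¬ R i j → (X ^ m) i j = 0 := by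
    intro m
    induction m with
    | zero => intro i j hij _; simpa using Matrix.one_apply_ne hij
    | succ m ih =>
      intro i j hij hR
      rw [pow_succ, Matrix.mul_apply]
      apply Finset.sum_eq_zero
      intro l _
      by_cases h1 : R i l
      · by_cases h2 : R l j
        · exact absurd (htr h1 h2) hR
        · rw [hXsupp l j h2, mul_zero]
      · by_cases hli : l = i
        · subst hli; rw [hXsupp l j hR, mul_zero]
        · rw [ih i l (Ne.symm hli) h1, zero_mul]
  -- powers drop ρ by at least m
  have hdrop : ∀ m, 1 ≤ m → ∀ i j : Fin n, ¬ ((ρ j : ℕ) + m ≤ (ρ i : ℕ)) → (X ^ m) i j = 0 := by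
    intro m
    induction m with
    | zero => intro h; omega
    | succ m ih =>
      intro _ i j hle
      rcases Nat.eq_zero_or_pos m with hm | hm
      · subst hm
        rw [pow_one]
        apply hXsupp
        intro hR
        exact hle (by have := hord hR; omega)
      · rw [pow_succ, Matrix.mul_apply]
        apply Finset.sum_eq_zero
        intro l _
        by_cases h2 : R l j
        · by_cases h1 : (ρ l : ℕ) + m ≤ (ρ i : ℕ)
          · exact (hle (show (ρ j : ℕ) + (m+1) ≤ (ρ i : ℕ) by have := hord h2; omega)).elim
          · rw [ih hm i l h1, zero_mul]
        · rw [hXsupp l j h2, mul_zero]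
  have hXn : X ^ n = 0 := by
    ext i j
    rw [hdrop n (i.pos) i j (by have := (ρ i).isLt; omega)]
    simp
  set M' : Matrix (Fin n) (Fin n) k := ∑ m ∈ Finset.range n, X ^ m with hM'
  have hcomm : X * M' = M' * X := by
    rw [hM', Finset.mul_sum, Finset.sum_mul]
    exact Finset.sum_congr rfl fun m _ => (Commute.pow_right (Commute.refl X) m).eq
  have hMX : M = 1 - X := by rw [hX]; noncomm_ring
  have hM'M : M' * M = 1 := by
    have h1 : M' * (X - 1) = X ^ n - 1 := geom_sum_mul X n
    rw [hXn, zero_sub] at h1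
    rw [hMX]
    have h2 : M' * (1 - X) = -(M' * (X - 1)) := by noncomm_ring
    rw [h2, h1, neg_neg]
  have hMM' : M * M' = 1 := by
    rw [hMX]
    have h2 : (1 - X) * M' = M' * (1 - X) := by
      rw [sub_mul, mul_sub, one_mul, mul_one, hcomm]
    rw [h2, ← hMX]
    exact hM'M
  refine ⟨M', ⟨?_, ?_⟩, hMM', hM'M⟩
  · intro i
    rw [hM']
    rw [Matrix.sum_apply]
    rw [Finset.sum_eq_single_of_mem 0 (Finset.mem_range.2 i.pos)]
    · simp
    · intro m _ hm
      exact hdrop m (Nat.one_le_iff_ne_zero.2 hm) i i (by omega)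
  · intro i j hij hR
    rw [hM', Matrix.sum_apply]
    exact Finset.sum_eq_zero fun m _ => hpow m i j hij hR

theorem InU.elementary {R : Fin n → Fin n → Prop} {i j : Fin n} (hij : i ≠ j) (hR : R i j)
    (c : k) : InU R (1 + Matrix.single i j c) := by
  constructor
  · intro a
    rw [Matrix.add_apply, Matrix.one_apply_eq, Matrix.single]
    have : ¬(i = a ∧ j = a) := fun ⟨e1, e2⟩ => hij (e1.trans e2.symm)
    simp [Matrix.of_apply, this]
  · intro a b hab hR'
    rw [Matrix.add_apply, Matrix.one_apply_ne hab, Matrix.single]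
    have : ¬(i = a ∧ j = b) := fun ⟨e1, e2⟩ => hR' (e1 ▸ e2 ▸ hR)
    simp [Matrix.of_apply, this]

open scoped Classical in
/-- The strictly-upper-triangular support of a matrix. -/
noncomputable def dirty (M : Matrix (Fin n) (Fin n) k) : Finset (Fin n × Fin n) :=
  Finset.univ.filter fun p => p.1 < p.2 ∧ M p.1 p.2 ≠ 0

theorem mem_dirty {M : Matrix (Fin n) (Fin n) k} {p : Fin n × Fin n} :
    p ∈ dirty M ↔ p.1 < p.2 ∧ M p.1 p.2 ≠ 0 := by
  classical simp [dirty]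

noncomputable def meas (M : Matrix (Fin n) (Fin n) k) : ℕ :=
  ∑ p ∈ dirty M, (n + 1) ^ (p.2 : ℕ)

theorem geom_lt {r : ℕ} (hr : 2 ≤ r) : ∀ T, ∑ t ∈ Finset.range T, r ^ t < r ^ T := by
  intro T
  induction T with
  | zero => simp
  | succ T ih =>
    rw [Finset.sum_range_succ, pow_succ]
    have : r ^ T * 2 ≤ r ^ T * r := Nat.mul_le_mul_left _ hr
    omega

include htr hord in
theorem InU.elim {g : Matrix (Fin n) (Fin n) k} (hg : InU R g) :
    ∃ u, InU (fun i j => R i j ∧ i < j) u ∧ InU (fun i j => R i j ∧ j < i) (u * g) := by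
  classical
  suffices H : ∀ (N : ℕ) (g : Matrix (Fin n) (Fin n) k), InU R g → meas g < N →
      ∃ u, InU (fun i j => R i j ∧ i < j) u ∧ InU (fun i j => R i j ∧ j < i) (u * g) from
    H (meas g + 1) g hg (Nat.lt_succ_self _)
  intro N
  induction N with
  | zero => intro g _ h; omega
  | succ N ih =>
    intro g hg hlt
    by_cases hD : dirty g = ∅
    · refine ⟨1, InU.one _, ?_⟩
      rw [one_mul]
      refine ⟨hg.1, ?_⟩
      intro i j hij hR
      rcases lt_or_gt_of_ne hij with h | h
      · by_contra hne
        have : (i, j) ∈ dirty g := mem_dirty.2 ⟨h, hne⟩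
        rw [hD] at this
        simp at this
      · exact hg.2 i j hij (fun hr => hR ⟨hr, h⟩)
    · obtain ⟨p, hp, hmax⟩ := Finset.exists_max_image (dirty g) (fun p => (p.2 : ℕ))
        (Finset.nonempty_iff_ne_empty.2 hD)
      obtain ⟨i, j⟩ := p
      obtain ⟨hij, hne⟩ := mem_dirty.1 hp
      simp only at hij hne hmax
      have hRij : R i j := by
        by_contra hR
        exact hne (hg.2 i j (ne_of_lt hij) hR)
      set E := (1 : Matrix (Fin n) (Fin n) k) + Matrix.single i j (-(g i j)) with hE
      have hEmem : InU (fun a b => R a b ∧ a < b) E := InU.elementary (ne_of_lt hij) ⟨hRij, hij⟩ _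
      have hEg_apply : ∀ a b, (E * g) a b = g a b + (if a = i then -(g i j) * g j b else 0) := by
        intro a b
        rw [hE, add_mul, one_mul, Matrix.add_apply]
        congr 1
        by_cases h : a = i
        · subst h
          rw [if_pos rfl, Matrix.single_mul_apply_same]
        · rw [if_neg h]
          exact Matrix.single_mul_apply_of_ne _ _ _ _ _ h _
      have hgj : ∀ b, j < b → g j b = 0 := by
        intro b hb
        by_contra hnz
        have := hmax (j, b) (mem_dirty.2 ⟨hb, hnz⟩)
        simp only at this
        omega
      have hgi : ∀ b, j < b → g i b = 0 := by
        intro b hb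
        by_contra hnz
        have := hmax (i, b) (mem_dirty.2 ⟨lt_trans hij hb, hnz⟩)
        simp only at this
        omega
      have hEgij : (E * g) i j = 0 := by
        rw [hEg_apply, if_pos rfl, hg.1 j]
        ring
      have hsub : dirty (E * g) ⊆ (dirty g).erase (i, j) ∪
          ((Finset.univ.filter (fun b : Fin n => b < j)).image (fun b => (i, b))) := by
        intro q hq
        obtain ⟨hq1, hq2⟩ := mem_dirty.1 hq
        by_cases hqi : q.1 = i
        · rcases lt_trichotomy q.2 j with hb | hb | hb
          · apply Finset.mem_union_right
            apply Finset.mem_image.2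
            exact ⟨q.2, Finset.mem_filter.2 ⟨Finset.mem_univ _, hb⟩, by
              rw [← hqi]⟩
          · exfalso
            apply hq2
            have : q = (i, j) := Prod.ext hqi hb
            rw [this]
            exact hEgij
          · exfalso
            apply hq2
            rw [hEg_apply, hqi, if_pos rfl, hgj q.2 hb, hgi q.2 hb]
            ring
        · apply Finset.mem_union_left
          apply Finset.mem_erase.2
          refine ⟨fun e => hqi (by rw [e]), ?_⟩
          apply mem_dirty.2
          refine ⟨hq1, ?_⟩
          rw [hEg_apply, if_neg hqi, add_zero] at hq2
          exact hq2
      have himg : ∑ p ∈ ((Finset.univ.filter (fun b : Fin n => b < j)).image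
          (fun b => (i, b))), (n + 1) ^ (p.2 : ℕ) < (n + 1) ^ (j : ℕ) := by
        rw [Finset.sum_image (fun x _ y _ e => by
          simpa using congrArg Prod.snd e)]
        have h1 : ∑ b ∈ Finset.univ.filter (fun b : Fin n => b < j), (n + 1) ^ (b : ℕ) =
            ∑ t ∈ (Finset.univ.filter (fun b : Fin n => b < j)).image Fin.val, (n + 1) ^ t := by
          rw [Finset.sum_image (fun x _ y _ e => Fin.val_injective e)]
        rw [h1]
        calc ∑ t ∈ (Finset.univ.filter (fun b : Fin n => b < j)).image Fin.val, (n + 1) ^ t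
            ≤ ∑ t ∈ Finset.range (j : ℕ), (n + 1) ^ t := by
              apply Finset.sum_le_sum_of_subset
              intro t ht
              obtain ⟨b, hb, rfl⟩ := Finset.mem_image.1 ht
              exact Finset.mem_range.2 (Finset.mem_filter.1 hb).2
          _ < (n + 1) ^ (j : ℕ) := geom_lt (by have := i.pos; omega) _
      have hmeas : meas (E * g) < meas g := by
        have h2 : ∑ p ∈ (dirty g).erase (i, j), (n + 1) ^ (p.2 : ℕ) + (n + 1) ^ (j : ℕ) =
            meas g := Finset.sum_erase_add _ _ hp
        have h3 : meas (E * g) ≤ ∑ p ∈ (dirty g).erase (i, j) ∪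
            ((Finset.univ.filter (fun b : Fin n => b < j)).image (fun b => (i, b))),
            (n + 1) ^ (p.2 : ℕ) := Finset.sum_le_sum_of_subset hsub
        have h4 := Finset.sum_union_inter (s₁ := (dirty g).erase (i, j))
          (s₂ := (Finset.univ.filter (fun b : Fin n => b < j)).image (fun b => (i, b)))
          (f := fun p : Fin n × Fin n => (n + 1) ^ (p.2 : ℕ))
        omega
      have hEgU : InU R (E * g) :=
        InU.mul (R := R) (ρ := ρ) htr hord (InU.mono (S := R) (fun a b h => h.1) hEmem) hg
      obtain ⟨u', hu', hu'g⟩ := ih (E * g) hEgU (by omega)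
      refine ⟨u' * E, ?_, ?_⟩
      · exact InU.mul (R := fun i j => R i j ∧ i < j) (ρ := ρ)
          (fun {a b c} hab hbc => ⟨htr hab.1 hbc.1, lt_trans hab.2 hbc.2⟩)
          (fun {i j} h => hord h.1) hu' hEmem
      · rw [mul_assoc]
        exact hu'g

include htr hord in
theorem InU.exists_factor_HK {g : Matrix (Fin n) (Fin n) k} (hg : InU R g) :
    ∃ u l, InU (fun i j => R i j ∧ i < j) u ∧ InU (fun i j => R i j ∧ j < i) l ∧ g = u * l := by
  obtain ⟨u₀, hu₀, hu₀g⟩ := InU.elim (R := R) (ρ := ρ) htr hord hg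
  obtain ⟨u₀', hu₀', h1, h2⟩ := InU.exists_inv (R := fun i j => R i j ∧ i < j) (ρ := ρ)
    (fun {a b c} hab hbc => ⟨htr hab.1 hbc.1, lt_trans hab.2 hbc.2⟩)
    (fun {i j} h => hord h.1) hu₀
  exact ⟨u₀', u₀ * g, hu₀', hu₀g, by rw [← mul_assoc, h2, one_mul]⟩

include htr hord in
theorem InU.exists_factor_KH {g : Matrix (Fin n) (Fin n) k} (hg : InU R g) :
    ∃ l u, InU (fun i j => R i j ∧ j < i) l ∧ InU (fun i j => R i j ∧ i < j) u ∧ g = l * u := by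
  obtain ⟨g', hg', hgg', hg'g⟩ := InU.exists_inv (R := R) (ρ := ρ) htr hord hg
  obtain ⟨u, l, hu, hl, hfact⟩ := InU.exists_factor_HK (R := R) (ρ := ρ) htr hord hg'
  obtain ⟨u', hu', huu', hu'u⟩ := InU.exists_inv (R := fun i j => R i j ∧ i < j) (ρ := ρ)
    (fun {a b c} hab hbc => ⟨htr hab.1 hbc.1, lt_trans hab.2 hbc.2⟩)
    (fun {i j} h => hord h.1) hu
  obtain ⟨l', hl', hll', hl'l⟩ := InU.exists_inv (R := fun i j => R i j ∧ j < i) (ρ := ρ)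
    (fun {a b c} hab hbc => ⟨htr hab.1 hbc.1, lt_trans hbc.2 hab.2⟩)
    (fun {i j} h => hord h.1) hl
  have e1 : g * (u * l) = 1 := by rw [← hfact]; exact hgg'
  have e2 : g * u = l' := by
    calc g * u = g * u * (l * l') := by rw [hll', mul_one]
    _ = g * (u * l) * l' := by rw [mul_assoc, mul_assoc, mul_assoc]
    _ = l' := by rw [e1, one_mul]
  have e3 : g = l' * u' := by
    calc g = g * (u * u') := by rw [huu', mul_one]
    _ = (g * u) * u' := by rw [mul_assoc]
    _ = l' * u' := by rw [e2]
  exact ⟨l', u', hl', hu', e3⟩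

theorem InU.eq_one_of_both {M : Matrix (Fin n) (Fin n) k}
    (h1 : InU (fun i j => R i j ∧ i < j) M) (h2 : InU (fun i j => R i j ∧ j < i) M) :
    M = 1 := by
  ext a b
  rcases lt_trichotomy a b with h | h | h
  · rw [h2.2 a b (ne_of_lt h) (fun hr => absurd hr.2 (lt_asymm h)),
      Matrix.one_apply_ne (ne_of_lt h)]
  · subst h; rw [h1.1, Matrix.one_apply_eq]
  · rw [h1.2 a b (ne_of_gt h) (fun hr => absurd hr.2 (lt_asymm h)),
      Matrix.one_apply_ne (ne_of_gt h)]

include htr hord in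
theorem InU.factor_unique_HK {u l u' l' : Matrix (Fin n) (Fin n) k}
    (hu : InU (fun i j => R i j ∧ i < j) u) (hl : InU (fun i j => R i j ∧ j < i) l)
    (hu' : InU (fun i j => R i j ∧ i < j) u') (hl' : InU (fun i j => R i j ∧ j < i) l')
    (h : u * l = u' * l') : u = u' ∧ l = l' := by
  have htrp : ∀ {a b c : Fin n}, (R a b ∧ a < b) → (R b c ∧ b < c) → (R a c ∧ a < c) :=
    fun hab hbc => ⟨htr hab.1 hbc.1, lt_trans hab.2 hbc.2⟩
  have htrm : ∀ {a b c : Fin n}, (R a b ∧ b < a) → (R b c ∧ c < b) → (R a c ∧ c < a) :=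
    fun hab hbc => ⟨htr hab.1 hbc.1, lt_trans hbc.2 hab.2⟩
  obtain ⟨iu', hiu', h1, h2⟩ := InU.exists_inv (R := fun i j => R i j ∧ i < j) (ρ := ρ)
    htrp (fun {i j} h => hord h.1) hu'
  obtain ⟨il, hil, h3, h4⟩ := InU.exists_inv (R := fun i j => R i j ∧ j < i) (ρ := ρ)
    htrm (fun {i j} h => hord h.1) hl
  have e1 : u = u' * (l' * il) := by
    calc u = u * (l * il) := by rw [h3, mul_one]
    _ = (u * l) * il := by rw [mul_assoc]
    _ = (u' * l') * il := by rw [h]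
    _ = u' * (l' * il) := by rw [mul_assoc]
  have e2 : iu' * u = l' * il := by
    calc iu' * u = (iu' * u') * (l' * il) := by rw [e1, ← mul_assoc]
    _ = l' * il := by rw [h2, one_mul]
  have hA : InU (fun i j => R i j ∧ i < j) (iu' * u) :=
    InU.mul (R := fun i j => R i j ∧ i < j) (ρ := ρ) htrp (fun {i j} h => hord h.1) hiu' hu
  have hB : InU (fun i j => R i j ∧ j < i) (l' * il) :=
    InU.mul (R := fun i j => R i j ∧ j < i) (ρ := ρ) htrm (fun {i j} h => hord h.1) hl' hil
  have hone : iu' * u = 1 := InU.eq_one_of_both hA (e2 ▸ hB)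
  have hu_eq : u = u' := by
    calc u = (u' * iu') * u := by rw [h1, one_mul]
    _ = u' * (iu' * u) := by rw [mul_assoc]
    _ = u' := by rw [hone, mul_one]
  refine ⟨hu_eq, ?_⟩
  have : u * l = u * l' := by rw [h, hu_eq]
  obtain ⟨iu, hiu, h5, h6⟩ := InU.exists_inv (R := fun i j => R i j ∧ i < j) (ρ := ρ)
    htrp (fun {i j} h => hord h.1) hu
  calc l = (iu * u) * l := by rw [h6, one_mul]
  _ = iu * (u * l) := by rw [mul_assoc]
  _ = iu * (u * l') := by rw [this]
  _ = (iu * u) * l' := by rw [mul_assoc]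
  _ = l' := by rw [h6, one_mul]

include htr hord in
theorem InU.factor_unique_KH {u l u' l' : Matrix (Fin n) (Fin n) k}
    (hl : InU (fun i j => R i j ∧ j < i) l) (hu : InU (fun i j => R i j ∧ i < j) u)
    (hl' : InU (fun i j => R i j ∧ j < i) l') (hu' : InU (fun i j => R i j ∧ i < j) u')
    (h : l * u = l' * u') : l = l' ∧ u = u' := by
  have htrp : ∀ {a b c : Fin n}, (R a b ∧ a < b) → (R b c ∧ b < c) → (R a c ∧ a < c) :=
    fun hab hbc => ⟨htr hab.1 hbc.1, lt_trans hab.2 hbc.2⟩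
  have htrm : ∀ {a b c : Fin n}, (R a b ∧ b < a) → (R b c ∧ c < b) → (R a c ∧ c < a) :=
    fun hab hbc => ⟨htr hab.1 hbc.1, lt_trans hbc.2 hab.2⟩
  obtain ⟨il', hil', h1, h2⟩ := InU.exists_inv (R := fun i j => R i j ∧ j < i) (ρ := ρ)
    htrm (fun {i j} h => hord h.1) hl'
  obtain ⟨iu, hiu, h3, h4⟩ := InU.exists_inv (R := fun i j => R i j ∧ i < j) (ρ := ρ)
    htrp (fun {i j} h => hord h.1) hu
  have e1 : l = l' * (u' * iu) := by
    calc l = l * (u * iu) := by rw [h3, mul_one]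
    _ = (l * u) * iu := by rw [mul_assoc]
    _ = (l' * u') * iu := by rw [h]
    _ = l' * (u' * iu) := by rw [mul_assoc]
  have e2 : il' * l = u' * iu := by
    calc il' * l = (il' * l') * (u' * iu) := by rw [e1, ← mul_assoc]
    _ = u' * iu := by rw [h2, one_mul]
  have hA : InU (fun i j => R i j ∧ j < i) (il' * l) :=
    InU.mul (R := fun i j => R i j ∧ j < i) (ρ := ρ) htrm (fun {i j} h => hord h.1) hil' hl
  have hB : InU (fun i j => R i j ∧ i < j) (u' * iu) :=
    InU.mul (R := fun i j => R i j ∧ i < j) (ρ := ρ) htrp (fun {i j} h => hord h.1) hu' hiu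
  have hone : il' * l = 1 := InU.eq_one_of_both (e2 ▸ hB) hA
  have hl_eq : l = l' := by
    calc l = (l' * il') * l := by rw [h1, one_mul]
    _ = l' * (il' * l) := by rw [mul_assoc]
    _ = l' := by rw [hone, mul_one]
  refine ⟨hl_eq, ?_⟩
  have heq : l * u = l * u' := by rw [h, hl_eq]
  obtain ⟨il, hil, h5, h6⟩ := InU.exists_inv (R := fun i j => R i j ∧ j < i) (ρ := ρ)
    htrm (fun {i j} h => hord h.1) hl
  calc u = (il * l) * u := by rw [h6, one_mul]
  _ = il * (l * u) := by rw [mul_assoc]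
  _ = il * (l * u') := by rw [heq]
  _ = (il * l) * u' := by rw [mul_assoc]
  _ = u' := by rw [h6, one_mul]

end ordered

section perm
variable (π : Equiv.Perm (Fin n))

theorem permConj_apply (M : Matrix (Fin n) (Fin n) k) (i j : Fin n) :
    permConj π M i j = M (π i) (π j) := by
  simp only [permConj, Equiv.Perm.permMatrix]
  rw [PEquiv.toMatrix_toPEquiv_mul, PEquiv.mul_toMatrix_toPEquiv]
  simp [Equiv.Perm.inv_def]

theorem mem_SConj_iff {g : Matrix (Fin n) (Fin n) k} :
    g ∈ SConj π ↔ InU (fun i j => π j < π i) g := by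
  constructor
  · rintro ⟨h, ⟨hd, hlow⟩, rfl⟩
    constructor
    · intro i; rw [permConj_apply]; exact hd _
    · intro i j hij hR
      rw [permConj_apply]
      apply hlow
      have hne : π i ≠ π j := fun e => hij (π.injective e)
      exact lt_of_le_of_ne (le_of_not_gt hR) hne
  · intro hg
    refine ⟨permConj π⁻¹ g, ⟨?_, ?_⟩, ?_⟩
    · intro i; rw [permConj_apply]; exact hg.1 _
    · intro i j hij
      rw [permConj_apply]
      apply hg.2
      · exact fun e => absurd ((π⁻¹).injective e) (ne_of_lt hij)
      · simp only [Equiv.Perm.inv_def, Equiv.apply_symm_apply]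
        exact not_lt.2 (le_of_lt hij)
    · ext i j
      rw [permConj_apply, permConj_apply]
      simp [Equiv.Perm.inv_def]

theorem mem_Eplus_iff {g : Matrix (Fin n) (Fin n) k} :
    g ∈ Eplus π ↔ InU (fun i j => π j < π i ∧ i < j) g := by
  constructor
  · rintro ⟨hS, hd, hupp⟩
    refine ⟨hd, ?_⟩
    intro i j hij hR
    rcases lt_or_gt_of_ne hij with h | h
    · exact ((mem_SConj_iff π).1 hS).2 i j hij (fun hr => hR ⟨hr, h⟩)
    · exact hupp i j h
  · intro hg
    refine ⟨(mem_SConj_iff π).2 (InU.mono (fun i j h => h.1) hg), hg.1, ?_⟩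
    intro i j h
    exact hg.2 i j (ne_of_gt h) (fun hr => lt_asymm h hr.2)

theorem mem_Eminus_iff {g : Matrix (Fin n) (Fin n) k} :
    g ∈ Eminus π ↔ InU (fun i j => π j < π i ∧ j < i) g := by
  constructor
  · rintro ⟨hS, hd, hlow⟩
    refine ⟨hd, ?_⟩
    intro i j hij hR
    rcases lt_or_gt_of_ne hij with h | h
    · exact hlow i j h
    · exact ((mem_SConj_iff π).1 hS).2 i j hij (fun hr => hR ⟨hr, h⟩)
  · intro hg
    refine ⟨(mem_SConj_iff π).2 (InU.mono (fun i j h => h.1) hg), hg.1, ?_⟩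
    intro i j h
    exact hg.2 i j (ne_of_lt h) (fun hr => lt_asymm h hr.2)

end perm
end Stmt5Aux

open Stmt5Aux

/-- Every `g ∈ π N⁻ π⁻¹` factors uniquely as `g = c₊ c₋` with `c₊ ∈ E⁺`, `c₋ ∈ E⁻`;
and the map `Φ : π N⁻ π⁻¹ → E⁺ × E⁻`, sending `g` (with factorizations
`g = b₋ b₊ = c₊ c₋`) to `(b₊, c₋)`, is a bijection. -/
theorem stmt_5 {k : Type*} [Field k] {n : ℕ} (π : Equiv.Perm (Fin n)) :
    (∀ g ∈ SConj (k := k) π,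
      ∃! p : Matrix (Fin n) (Fin n) k × Matrix (Fin n) (Fin n) k,
        p.1 ∈ Eplus π ∧ p.2 ∈ Eminus π ∧ g = p.1 * p.2) ∧
    (∀ Φ : (SConj (k := k) π) → (Eplus (k := k) π) × (Eminus (k := k) π),
      (∀ g : SConj (k := k) π,
        (∃ bm ∈ Eminus π, (g : Matrix (Fin n) (Fin n) k) = bm * ((Φ g).1 : Matrix (Fin n) (Fin n) k)) ∧
        (∃ cp ∈ Eplus π, (g : Matrix (Fin n) (Fin n) k) = cp * ((Φ g).2 : Matrix (Fin n) (Fin n) k))) →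
      Function.Bijective Φ) := by
  classical
  have htr : ∀ {a b c : Fin n}, π b < π a → π c < π b → π c < π a :=
    fun h1 h2 => lt_trans h2 h1
  have hord : ∀ {i j : Fin n}, π j < π i → π j < π i := fun h => h
  have htrp : ∀ {a b c : Fin n}, (π b < π a ∧ a < b) → (π c < π b ∧ b < c) →
      (π c < π a ∧ a < c) := fun h1 h2 => ⟨lt_trans h2.1 h1.1, lt_trans h1.2 h2.2⟩
  have htrm : ∀ {a b c : Fin n}, (π b < π a ∧ b < a) → (π c < π b ∧ c < b) →
      (π c < π a ∧ c < a) := fun h1 h2 => ⟨lt_trans h2.1 h1.1, lt_trans h2.2 h1.2⟩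
  have hordp : ∀ {i j : Fin n}, (π j < π i ∧ i < j) → π j < π i := fun h => h.1
  have hordm : ∀ {i j : Fin n}, (π j < π i ∧ j < i) → π j < π i := fun h => h.1
  constructor
  · -- unique factorization g = c₊ c₋
    intro g hgS
    have hg := (mem_SConj_iff π).1 hgS
    obtain ⟨u, l, hu, hl, hfact⟩ := InU.exists_factor_HK (R := fun i j => π j < π i)
      (ρ := fun i => π i) htr hord hg
    refine ⟨(u, l), ⟨(mem_Eplus_iff π).2 hu, (mem_Eminus_iff π).2 hl, hfact⟩, ?_⟩
    rintro ⟨u', l'⟩ ⟨hu', hl', hfact'⟩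
    have heq : u' * l' = u * l := by rw [← hfact', ← hfact]
    obtain ⟨e1, e2⟩ := InU.factor_unique_HK (R := fun i j => π j < π i)
      (ρ := fun i => π i) htr hord ((mem_Eplus_iff π).1 hu') ((mem_Eminus_iff π).1 hl')
      hu hl heq
    exact Prod.ext e1 e2
  · intro Φ hΦ
    constructor
    · -- injective
      intro g g' hΦeq
      obtain ⟨bm, hbm, hgbm⟩ := (hΦ g).1
      obtain ⟨cp, hcp, hgcp⟩ := (hΦ g).2
      obtain ⟨bm', hbm', hgbm'⟩ := (hΦ g').1
      obtain ⟨cp', hcp', hgcp'⟩ := (hΦ g').2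
      rw [← hΦeq] at hgbm' hgcp'
      have hgR := (mem_SConj_iff π).1 g.2
      obtain ⟨ig, higR, hgig, higg⟩ := InU.exists_inv (R := fun i j => π j < π i)
        (ρ := fun i => π i) htr hord hgR
      obtain ⟨ibm, hibm, hb1, hb2⟩ := InU.exists_inv (R := fun i j => π j < π i ∧ j < i)
        (ρ := fun i => π i) htrm hordm ((mem_Eminus_iff π).1 hbm)
      obtain ⟨icp, hicp, hc1, hc2⟩ := InU.exists_inv (R := fun i j => π j < π i ∧ i < j)
        (ρ := fun i => π i) htrp hordp ((mem_Eplus_iff π).1 hcp)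
      have e1 : ((Φ g).1 : Matrix (Fin n) (Fin n) k) = ibm * (g : Matrix (Fin n) (Fin n) k) := by
        rw [hgbm, ← mul_assoc, hb2, one_mul]
      have e2 : (↑g' : Matrix (Fin n) (Fin n) k) = (bm' * ibm) * (g : Matrix (Fin n) (Fin n) k) := by
        rw [mul_assoc, ← e1]; exact hgbm'
      have e3 : ((Φ g).2 : Matrix (Fin n) (Fin n) k) = icp * (g : Matrix (Fin n) (Fin n) k) := by
        rw [hgcp, ← mul_assoc, hc2, one_mul]
      have e4 : (↑g' : Matrix (Fin n) (Fin n) k) = (cp' * icp) * (g : Matrix (Fin n) (Fin n) k) := by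
        rw [mul_assoc, ← e3]; exact hgcp'
      have e24 : (bm' * ibm) * (g : Matrix (Fin n) (Fin n) k) = (cp' * icp) * (g : Matrix (Fin n) (Fin n) k) := by
        rw [← e2, ← e4]
      have e5 : bm' * ibm = cp' * icp := by
        have h9 : (bm' * ibm) * ((g : Matrix (Fin n) (Fin n) k) * ig)
            = (cp' * icp) * ((g : Matrix (Fin n) (Fin n) k) * ig) := by
          rw [← mul_assoc, ← mul_assoc, e24]
        rwa [hgig, mul_one, mul_one] at h9
      have hRmB : InU (fun i j => π j < π i ∧ j < i) (bm' * ibm) :=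
        InU.mul (R := fun i j => π j < π i ∧ j < i) (ρ := fun i => π i) htrm hordm
          ((mem_Eminus_iff π).1 hbm') hibm
      have hRpC : InU (fun i j => π j < π i ∧ i < j) (cp' * icp) :=
        InU.mul (R := fun i j => π j < π i ∧ i < j) (ρ := fun i => π i) htrp hordp
          ((mem_Eplus_iff π).1 hcp') hicp
      have hone : bm' * ibm = 1 :=
        InU.eq_one_of_both (R := fun i j => π j < π i) (e5 ▸ hRpC) hRmB
      apply Subtype.ext
      rw [e2, hone, one_mul]
    · -- surjective
      rintro ⟨u, l⟩
      have huR : InU (fun i j => π j < π i ∧ i < j) (↑u : Matrix (Fin n) (Fin n) k) :=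
        (mem_Eplus_iff π).1 u.2
      have hlR : InU (fun i j => π j < π i ∧ j < i) (↑l : Matrix (Fin n) (Fin n) k) :=
        (mem_Eminus_iff π).1 l.2
      obtain ⟨iu, hiu, hu1, hu2⟩ := InU.exists_inv (R := fun i j => π j < π i ∧ i < j)
        (ρ := fun i => π i) htrp hordp huR
      have htR : InU (fun i j => π j < π i) ((↑l : Matrix (Fin n) (Fin n) k) * iu) :=
        InU.mul (R := fun i j => π j < π i) (ρ := fun i => π i) htr hord
          (InU.mono (S := fun i j => π j < π i) (fun i j h => h.1) hlR)
          (InU.mono (S := fun i j => π j < π i) (fun i j h => h.1) hiu)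
      obtain ⟨h₀, k₀, hh₀, hk₀, hfact⟩ := InU.exists_factor_HK (R := fun i j => π j < π i)
        (ρ := fun i => π i) htr hord htR
      obtain ⟨ih₀, hih₀, hi1, hi2⟩ := InU.exists_inv (R := fun i j => π j < π i ∧ i < j)
        (ρ := fun i => π i) htrp hordp hh₀
      set gM := k₀ * (↑u : Matrix (Fin n) (Fin n) k) with hgM
      have hgR : InU (fun i j => π j < π i) gM :=
        InU.mul (R := fun i j => π j < π i) (ρ := fun i => π i) htr hord
          (InU.mono (S := fun i j => π j < π i) (fun i j h => h.1) hk₀)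
          (InU.mono (S := fun i j => π j < π i) (fun i j h => h.1) huR)
      have hgS : gM ∈ SConj π := (mem_SConj_iff π).2 hgR
      have e0 : k₀ = ih₀ * ((↑l : Matrix (Fin n) (Fin n) k) * iu) := by
        calc k₀ = (ih₀ * h₀) * k₀ := by rw [hi2, one_mul]
        _ = ih₀ * (h₀ * k₀) := by rw [mul_assoc]
        _ = ih₀ * (↑l * iu) := by rw [← hfact]
      have e1 : gM = ih₀ * (↑l : Matrix (Fin n) (Fin n) k) := by
        rw [hgM, e0]
        calc (ih₀ * ((↑l : Matrix (Fin n) (Fin n) k) * iu)) * (u : Matrix (Fin n) (Fin n) k)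
            = ih₀ * ((l : Matrix (Fin n) (Fin n) k) * (iu * (u : Matrix (Fin n) (Fin n) k))) := by rw [mul_assoc, mul_assoc]
        _ = ih₀ * ↑l := by rw [hu2, mul_one]
      refine ⟨⟨gM, hgS⟩, ?_⟩
      obtain ⟨bm, hbm, hgbm⟩ := (hΦ ⟨gM, hgS⟩).1
      obtain ⟨cp, hcp, hgcp⟩ := (hΦ ⟨gM, hgS⟩).2
      have eq1 : bm * ((Φ ⟨gM, hgS⟩).1 : Matrix (Fin n) (Fin n) k) = k₀ * (u : Matrix (Fin n) (Fin n) k) := by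
        rw [← hgbm]
      obtain ⟨eb, eu⟩ := InU.factor_unique_KH (R := fun i j => π j < π i)
        (ρ := fun i => π i) htr hord ((mem_Eminus_iff π).1 hbm)
        ((mem_Eplus_iff π).1 (Φ ⟨gM, hgS⟩).1.2) hk₀ huR eq1
      have eq2 : cp * ((Φ ⟨gM, hgS⟩).2 : Matrix (Fin n) (Fin n) k) = ih₀ * (l : Matrix (Fin n) (Fin n) k) := by
        rw [← hgcp]; exact e1
      obtain ⟨ec, el⟩ := InU.factor_unique_HK (R := fun i j => π j < π i)
        (ρ := fun i => π i) htr hord ((mem_Eplus_iff π).1 hcp)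
        ((mem_Eminus_iff π).1 (Φ ⟨gM, hgS⟩).2.2) hih₀ hlR eq2
      exact Prod.ext (Subtype.ext eu) (Subtype.ext el)
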